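/- Let R be a quasi-unital ring. The smoothening functor M ↦ R ⊗_R M from left R-modules to smooth left R-modules is right adjoint to the inclusion of smooth modules into all modules. Concretely: for any smooth left R-module N and any left R-module M, composition with the canonical map R ⊗_R M → M gives a natural bijection Hom_R(N, R ⊗_R M) ≅ Hom_R(N, M). -/

import Mathlib

open TensorProduct LinearMap

variable (R : Type) [NonUnitalRing R] [Module ℂ R] [SMulCommClass ℂ R R]
  [IsScalarTower ℂ R R]

/-- The bar differential `R ⊗ R ⊗ R → R ⊗ R`. -/
noncomputable def barD : (R ⊗[ℂ] (R ⊗[ℂ] R)) →ₗ[ℂ] R ⊗[ℂ] R :=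
  (rTensor R (mul' ℂ R)) ∘ₗ (TensorProduct.assoc ℂ R R R).symm.toLinearMap
    - lTensor R (mul' ℂ R)

/-- `R` is quasi-unital: the canonical map `R ⊗_R R → R` is an isomorphism. -/
def IsQuasiUnital : Prop :=
  ∃ f : ((R ⊗[ℂ] R) ⧸ LinearMap.range (barD R)) →ₗ[ℂ] R,
    f ∘ₗ (LinearMap.range (barD R)).mkQ = mul' ℂ R ∧ Function.Bijective f

variable {M : Type} [AddCommGroup M] [Module ℂ M]

/-- The bar differential `R ⊗ R ⊗ M → R ⊗ M` for a left module with bilinear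
action `act`. -/
noncomputable def barDM (act : R →ₗ[ℂ] M →ₗ[ℂ] M) :
    (R ⊗[ℂ] (R ⊗[ℂ] M)) →ₗ[ℂ] R ⊗[ℂ] M :=
  (rTensor M (mul' ℂ R)) ∘ₗ (TensorProduct.assoc ℂ R R M).symm.toLinearMap
    - lTensor R (TensorProduct.lift act)

/-- The smoothening `R ⊗_R M`. -/
noncomputable abbrev Smoothening (act : R →ₗ[ℂ] M →ₗ[ℂ] M) :=
  (R ⊗[ℂ] M) ⧸ LinearMap.range (barDM R act)


lemma barDM_tmul {A : Type} [AddCommGroup A] [Module ℂ A]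
    (act : R →ₗ[ℂ] A →ₗ[ℂ] A) (r s : R) (m : A) :
    barDM R act (r ⊗ₜ[ℂ] (s ⊗ₜ[ℂ] m)) = (r * s) ⊗ₜ[ℂ] m - r ⊗ₜ[ℂ] (act s m) := by
  simp [barDM, TensorProduct.assoc_symm_tmul]

/-- The smoothening functor `M ↦ R ⊗_R M` is right adjoint to the inclusion of smooth
modules: for any smooth left `R`-module `N` and any left `R`-module `M`, composing
with the canonical map `ε : R ⊗_R M → M` gives a bijection
`Hom_R(N, R ⊗_R M) ≅ Hom_R(N, M)`. -/
theorem smoothening_right_adjoint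
    (hR : IsQuasiUnital R)
    -- the module `M`
    (actM : R →ₗ[ℂ] M →ₗ[ℂ] M)
    (hactM : ∀ (r s : R) (m : M), actM (r * s) m = actM r (actM s m))
    -- the left `R`-action on the smoothening `S = R ⊗_R M`
    (actS : R →ₗ[ℂ] Smoothening R actM →ₗ[ℂ] Smoothening R actM)
    (hactS : ∀ (r s : R) (m : M),
      actS r ((LinearMap.range (barDM R actM)).mkQ (s ⊗ₜ[ℂ] m)) =
        (LinearMap.range (barDM R actM)).mkQ ((r * s) ⊗ₜ[ℂ] m))
    -- the canonical map `ε : S → M`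
    (ε : Smoothening R actM →ₗ[ℂ] M)
    (hε : ε ∘ₗ (LinearMap.range (barDM R actM)).mkQ = TensorProduct.lift actM)
    -- a smooth module `N`
    (N : Type) [AddCommGroup N] [Module ℂ N]
    (actN : R →ₗ[ℂ] N →ₗ[ℂ] N)
    (hactN : ∀ (r s : R) (n : N), actN (r * s) n = actN r (actN s n))
    (hNsmooth : ∃ g : ((R ⊗[ℂ] N) ⧸ LinearMap.range (barDM R actN)) →ₗ[ℂ] N,
      g ∘ₗ (LinearMap.range (barDM R actN)).mkQ = TensorProduct.lift actN ∧
      Function.Bijective g) :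
    ∀ φ : N →ₗ[ℂ] M, (∀ (r : R) (n : N), φ (actN r n) = actM r (φ n)) →
      ∃! ψ : N →ₗ[ℂ] Smoothening R actM,
        (∀ (r : R) (n : N), ψ (actN r n) = actS r (ψ n)) ∧ ε ∘ₗ ψ = φ := by
  intro φ hφ
  classical
  obtain ⟨g, hg, hgbij⟩ := hNsmooth
  have hgapp : ∀ x, g ((LinearMap.range (barDM R actN)).mkQ x) = TensorProduct.lift actN x := by
    intro x; rw [← LinearMap.comp_apply, hg]
  have hεapp : ∀ x, ε ((LinearMap.range (barDM R actM)).mkQ x) = TensorProduct.lift actM x := by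
    intro x; rw [← LinearMap.comp_apply, hε]
  have hlift_surj : Function.Surjective (TensorProduct.lift actN) := by
    intro n
    obtain ⟨x, hx⟩ := hgbij.2 n
    obtain ⟨y, rfl⟩ := Submodule.mkQ_surjective _ x
    exact ⟨y, by rw [← hgapp]; exact hx⟩
  -- key quotient relation in the smoothening of M
  have hrel : ∀ (r s : R) (m : M),
      (LinearMap.range (barDM R actM)).mkQ ((r * s) ⊗ₜ[ℂ] m) =
        (LinearMap.range (barDM R actM)).mkQ (r ⊗ₜ[ℂ] (actM s m)) := by
    intro r s m
    rw [Submodule.mkQ_apply, Submodule.mkQ_apply, Submodule.Quotient.eq]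
    exact ⟨r ⊗ₜ[ℂ] (s ⊗ₜ[ℂ] m), (barDM_tmul R actM r s m)⟩
  -- key identity: actS r x = mkQ (r ⊗ ε x)
  have hkeyS : ∀ (r : R) (x : Smoothening R actM),
      actS r x = (LinearMap.range (barDM R actM)).mkQ (r ⊗ₜ[ℂ] (ε x)) := by
    intro r x
    have hmaps : (actS r) = ((LinearMap.range (barDM R actM)).mkQ ∘ₗ
        ((TensorProduct.mk ℂ R M r) ∘ₗ ε)) := by
      apply Submodule.linearMap_qext
      apply TensorProduct.ext'
      intro s m
      simp only [LinearMap.comp_apply, TensorProduct.mk_apply]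
      rw [hactS r s m, hεapp (s ⊗ₜ[ℂ] m), TensorProduct.lift.tmul, hrel r s m]
    rw [hmaps]; rfl
  -- any equivariant ψ over φ satisfies ψ ∘ lift actN = mkQ ∘ lTensor φ
  have hdet : ∀ ψ : N →ₗ[ℂ] Smoothening R actM,
      (∀ (r : R) (n : N), ψ (actN r n) = actS r (ψ n)) → ε ∘ₗ ψ = φ →
      ψ ∘ₗ TensorProduct.lift actN =
        (LinearMap.range (barDM R actM)).mkQ ∘ₗ lTensor R φ := by
    intro ψ h1 h2
    apply TensorProduct.ext'
    intro s n
    simp only [LinearMap.comp_apply, TensorProduct.lift.tmul, lTensor_tmul]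
    rw [h1 s n, hkeyS s (ψ n)]
    have hεψ : ε (ψ n) = φ n := by rw [← LinearMap.comp_apply, h2]
    rw [hεψ]
  -- the descended map exists
  have hcomp : (LinearMap.range (barDM R actM)).mkQ ∘ₗ lTensor R φ ∘ₗ barDM R actN = 0 := by
    apply TensorProduct.ext'
    intro r y
    induction y using TensorProduct.induction_on with
    | zero => simp [TensorProduct.tmul_zero]
    | add a b ha hb =>
        simp only [LinearMap.zero_apply] at ha hb ⊢
        rw [TensorProduct.tmul_add, map_add, ha, hb, add_zero]
    | tmul s m =>
        simp only [LinearMap.comp_apply, LinearMap.zero_apply]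
        rw [barDM_tmul R actN r s m]
        simp only [map_sub, lTensor_tmul]
        rw [hφ s m, hrel r s (φ m), sub_self]
  have hle : LinearMap.range (barDM R actN) ≤
      LinearMap.ker ((LinearMap.range (barDM R actM)).mkQ ∘ₗ lTensor R φ) := by
    rintro x ⟨y, rfl⟩
    have := congrFun (congrArg DFunLike.coe hcomp) y
    simpa using this
  set ψbar := (LinearMap.range (barDM R actN)).liftQ
      ((LinearMap.range (barDM R actM)).mkQ ∘ₗ lTensor R φ) hle with hψbar
  have hψbar_mkQ : ∀ x, ψbar ((LinearMap.range (barDM R actN)).mkQ x) =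
      (LinearMap.range (barDM R actM)).mkQ (lTensor R φ x) := by
    intro x; simp [hψbar]
  set e := LinearEquiv.ofBijective g hgbij with he
  set ψ₀ : N →ₗ[ℂ] Smoothening R actM := ψbar ∘ₗ (e.symm : N →ₗ[ℂ] _) with hψ₀
  have hψ₀g : ∀ x, ψ₀ (TensorProduct.lift actN x) =
      (LinearMap.range (barDM R actM)).mkQ (lTensor R φ x) := by
    intro x
    have h1 : TensorProduct.lift actN x = e ((LinearMap.range (barDM R actN)).mkQ x) :=
      (hgapp x).symm
    rw [hψ₀]
    simp only [LinearMap.comp_apply, LinearEquiv.coe_coe, h1, LinearEquiv.symm_apply_apply]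
    exact hψbar_mkQ x
  have hεψ₀ : ε ∘ₗ ψ₀ = φ := by
    apply LinearMap.ext
    intro n
    obtain ⟨x, rfl⟩ := hlift_surj n
    rw [LinearMap.comp_apply, hψ₀g x]
    induction x using TensorProduct.induction_on with
    | zero => simp
    | add a b ha hb => simp only [map_add]; rw [ha, hb]
    | tmul s m =>
        rw [lTensor_tmul, hεapp (s ⊗ₜ[ℂ] (φ m)), TensorProduct.lift.tmul,
          TensorProduct.lift.tmul, ← hφ]
  have hequiv : ∀ (r : R) (n : N), ψ₀ (actN r n) = actS r (ψ₀ n) := by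
    intro r n
    obtain ⟨x, rfl⟩ := hlift_surj n
    induction x using TensorProduct.induction_on with
    | zero => simp
    | add a b ha hb => simp only [map_add]; rw [ha, hb]
    | tmul s m =>
        rw [TensorProduct.lift.tmul]
        have h1 : actN r (actN s m) = TensorProduct.lift actN ((r * s) ⊗ₜ[ℂ] m) := by
          rw [TensorProduct.lift.tmul, hactN]
        have h2 : actN s m = TensorProduct.lift actN (s ⊗ₜ[ℂ] m) := rfl
        rw [h1, hψ₀g, h2, hψ₀g, lTensor_tmul, lTensor_tmul, hactS r s (φ m)]
  refine ⟨ψ₀, ⟨hequiv, hεψ₀⟩, ?_⟩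
  rintro ψ ⟨h1, h2⟩
  have hd1 := hdet ψ h1 h2
  have hd2 := hdet ψ₀ hequiv hεψ₀
  apply LinearMap.ext
  intro n
  obtain ⟨x, rfl⟩ := hlift_surj n
  have e1 := congrFun (congrArg DFunLike.coe hd1) x
  have e2 := congrFun (congrArg DFunLike.coe hd2) x
  simp only [LinearMap.comp_apply] at e1 e2
  rw [e1, e2]
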